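/- Let G and H be groups that are elementarily equivalent as structures in the language of groups, and let c be a natural number. If every strictly decreasing chain of centralizers of finite subsets of G has length at most c, then every strictly decreasing chain of centralizers of finite subsets of H has length at most c. -/

import Mathlib

open FirstOrder Language

/-- The function symbols of the first-order language of groups:
a binary multiplication, a unary inversion, and a constant for the identity. -/
inductive GroupFn : ℕ → Type
  | mul : GroupFn 2
  | inv : GroupFn 1
  | one : GroupFn 0

/-- The first-order language of groups. -/
def groupLang : Language where
  Functions := GroupFn
  Relations _ := Empty

/-- Any group is a structure in the language of groups in the natural way. -/
instance groupLangStructure (G : Type*) [Group G] : groupLang.Structure G where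
  funMap {_} f v :=
    match f with
    | .mul => v 0 * v 1
    | .inv => (v 0)⁻¹
    | .one => 1
  RelMap {_} r _ := Empty.elim r


namespace CentAux
open FirstOrder Language BoundedFormula

/-- term multiplication -/
def mulT {n : ℕ} (t s : groupLang.Term (Empty ⊕ Fin n)) : groupLang.Term (Empty ⊕ Fin n) :=
  Term.func GroupFn.mul ![t, s]

def commF {n : ℕ} (a b : Fin n) : groupLang.BoundedFormula Empty n :=
  Term.bdEqual (mulT (Term.var (Sum.inr a)) (Term.var (Sum.inr b)))
               (mulT (Term.var (Sum.inr b)) (Term.var (Sum.inr a)))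

lemma realize_commF {M : Type*} [Group M] {n : ℕ} (a b : Fin n) (v : Empty → M)
    (xs : Fin n → M) :
    (commF a b).Realize v xs ↔ xs a * xs b = xs b * xs a := by
  simp only [commF, mulT, BoundedFormula.realize_bdEqual, Term.realize_func, Term.realize_var,
    Sum.elim_inr]
  exact Iff.rfl

def χ {n : ℕ} (p : Fin n × Fin n) : groupLang.BoundedFormula Empty (n + n) :=
  if p.2 < p.1 then commF (Fin.natAdd n p.1) (Fin.castAdd n p.2)
  else if p.2 = p.1 then (commF (Fin.natAdd n p.1) (Fin.castAdd n p.2)).not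
  else BoundedFormula.falsum.not

/-- The sentence asserting a witness configuration for a centralizer chain of length `n`. -/
noncomputable def σ (n : ℕ) : groupLang.Sentence :=
  (BoundedFormula.iInf (χ (n := n))).exs

lemma realize_sigma (M : Type*) [Group M] (n : ℕ) :
    M ⊨ σ n ↔ ∃ b x : Fin n → M,
      (∀ i j : Fin n, j < i → x i * b j = b j * x i) ∧
      (∀ i : Fin n, ¬ x i * b i = b i * x i) := by
  rw [Sentence.Realize, σ, BoundedFormula.realize_exs]
  constructor
  · rintro ⟨xs, hxs⟩
    rw [BoundedFormula.realize_iInf] at hxs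
    refine ⟨fun j => xs (Fin.castAdd n j), fun i => xs (Fin.natAdd n i), ?_, ?_⟩
    · intro i j hj
      have := hxs (i, j)
      rw [χ, if_pos hj, realize_commF] at this
      exact this
    · intro i h
      have := hxs (i, i)
      rw [χ, if_neg (lt_irrefl i), if_pos rfl, BoundedFormula.realize_not, realize_commF] at this
      exact this h
  · rintro ⟨b, x, h1, h2⟩
    refine ⟨Fin.append b x, ?_⟩
    rw [BoundedFormula.realize_iInf]
    rintro ⟨i, j⟩
    rw [χ]
    split_ifs with hlt heq
    · rw [realize_commF, Fin.append_right, Fin.append_left]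
      exact h1 i j hlt
    · rw [BoundedFormula.realize_not, realize_commF, Fin.append_right, Fin.append_left]
      simp only at heq; rw [heq]; exact h2 i
    · exact fun h => h

end CentAux

/-- Every strictly decreasing chain of centralizers of *finite* subsets of `G` has length
at most `c`. -/
def FinCentChainLE (G : Type*) [Group G] (c : ℕ) : Prop :=
  ∀ (n : ℕ) (f : Fin (n + 1) → Finset G),
    (∀ i : Fin n,
      Set.centralizer (↑(f i.succ) : Set G) ⊂ Set.centralizer (↑(f i.castSucc) : Set G)) →
    n ≤ c

namespace CentAux

lemma le_of_witness {M : Type*} [Group M] {c n : ℕ}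
    (hM : FinCentChainLE M c) (b x : Fin n → M)
    (h1 : ∀ i j : Fin n, j < i → x i * b j = b j * x i)
    (h2 : ∀ i : Fin n, ¬ x i * b i = b i * x i) : n ≤ c := by
  classical
  apply hM n (fun i => (Finset.univ.filter (fun j : Fin n => (j : ℕ) < (i : ℕ))).image b)
  intro i
  constructor
  · apply Set.centralizer_subset
    intro a ha
    simp only [Finset.coe_image, Set.mem_image, Finset.mem_coe, Finset.mem_filter,
      Finset.mem_univ, true_and, Fin.coe_castSucc, Fin.val_succ] at ha ⊢
    obtain ⟨j, hj, rfl⟩ := ha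
    exact ⟨j, by omega, rfl⟩
  · intro hsub
    have hxi : x i ∈ Set.centralizer
        (↑((Finset.univ.filter (fun j : Fin n => (j : ℕ) < ((i.castSucc : Fin (n+1)) : ℕ))).image b) : Set M) := by
      rw [Set.mem_centralizer_iff]
      intro m hm
      simp only [Finset.coe_image, Set.mem_image, Finset.mem_coe, Finset.mem_filter,
        Finset.mem_univ, true_and, Fin.coe_castSucc] at hm
      obtain ⟨j, hj, rfl⟩ := hm
      exact (h1 i j hj).symm
    have hxi' := hsub hxi
    rw [Set.mem_centralizer_iff] at hxi'
    have hbi : b i ∈ ((Finset.univ.filter (fun j : Fin n => (j : ℕ) < ((i.succ : Fin (n+1)) : ℕ))).image b : Set M) := by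
      simp only [Finset.coe_image, Set.mem_image, Finset.mem_coe, Finset.mem_filter,
        Finset.mem_univ, true_and, Fin.val_succ]
      exact ⟨i, by omega, rfl⟩
    exact h2 i (hxi' (b i) hbi).symm

lemma witness_of_chain {M : Type*} [Group M] {n : ℕ} (f : Fin (n + 1) → Finset M)
    (hf : ∀ i : Fin n,
      Set.centralizer (↑(f i.succ) : Set M) ⊂ Set.centralizer (↑(f i.castSucc) : Set M)) :
    ∃ b x : Fin n → M,
      (∀ i j : Fin n, j < i → x i * b j = b j * x i) ∧
      (∀ i : Fin n, ¬ x i * b i = b i * x i) := by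
  have step : ∀ i : Fin n, Set.centralizer (↑(f i.succ) : Set M)
      ⊆ Set.centralizer (↑(f i.castSucc) : Set M) := fun i => (hf i).subset
  have mono : ∀ (d : ℕ) (k : Fin (n + 1)) (h : (k : ℕ) + d ≤ n),
      Set.centralizer (↑(f ⟨(k : ℕ) + d, by omega⟩) : Set M)
        ⊆ Set.centralizer (↑(f k) : Set M) := by
    intro d
    induction d with
    | zero =>
      intro k h
      have : (⟨(k : ℕ) + 0, by omega⟩ : Fin (n + 1)) = k := Fin.ext (by simp)
      rw [this]
    | succ d ih =>
      intro k h
      refine subset_trans ?_ (ih k (by omega))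
      have hs := step ⟨(k : ℕ) + d, by omega⟩
      have e1 : (⟨(k : ℕ) + d, by omega⟩ : Fin n).succ = (⟨(k : ℕ) + (d + 1), by omega⟩ : Fin (n + 1)) :=
        Fin.ext (by simp [Fin.val_succ]; omega)
      have e2 : (⟨(k : ℕ) + d, by omega⟩ : Fin n).castSucc = (⟨(k : ℕ) + d, by omega⟩ : Fin (n + 1)) :=
        Fin.ext (by simp)
      rw [e1, e2] at hs
      exact hs
  have mono' : ∀ k m : Fin (n + 1), k ≤ m →
      Set.centralizer (↑(f m) : Set M) ⊆ Set.centralizer (↑(f k) : Set M) := by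
    intro k m hkm
    have h1 : (k : ℕ) + ((m : ℕ) - (k : ℕ)) ≤ n := by omega
    have e : (⟨(k : ℕ) + ((m : ℕ) - (k : ℕ)), by omega⟩ : Fin (n + 1)) = m :=
      Fin.ext (by simp; omega)
    have := mono ((m : ℕ) - (k : ℕ)) k h1
    rwa [e] at this
  have key : ∀ i : Fin n, ∃ y : M, y ∈ Set.centralizer (↑(f i.castSucc) : Set M) ∧
      ∃ a ∈ f i.succ, ¬ a * y = y * a := by
    intro i
    obtain ⟨y, hy1, hy2⟩ := Set.not_subset.1 (hf i).2
    rw [Set.mem_centralizer_iff] at hy2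
    push_neg at hy2
    obtain ⟨a, ha, hay⟩ := hy2
    exact ⟨y, hy1, a, ha, hay⟩
  choose y hy a ha hay using key
  refine ⟨a, y, ?_, ?_⟩
  · intro i j hji
    have hsub : Set.centralizer (↑(f i.castSucc) : Set M)
        ⊆ Set.centralizer (↑(f j.succ) : Set M) := by
      apply mono'
      simp only [Fin.le_def, Fin.val_succ, Fin.coe_castSucc]
      exact hji
    have := hsub (hy i)
    rw [Set.mem_centralizer_iff] at this
    exact (this (a j) (ha j)).symm
  · intro i h
    exact hay i h.symm

end CentAux

/-- If `G` and `H` are elementarily equivalent groups (in the language of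
groups) and every strictly decreasing chain of centralizers of finite subsets of `G` has
length at most `c`, then the same holds in `H`. -/
theorem finCentChainLE_of_elementarilyEquivalent
    (G H : Type*) [Group G] [Group H] (c : ℕ)
    (heq : groupLang.ElementarilyEquivalent G H)
    (hG : FinCentChainLE G c) :
    FinCentChainLE H c := by
  intro n f hf
  obtain ⟨b, x, h1, h2⟩ := CentAux.witness_of_chain f hf
  have hH : H ⊨ CentAux.σ n := (CentAux.realize_sigma H n).2 ⟨b, x, h1, h2⟩
  have hGσ : G ⊨ CentAux.σ n := (heq.realize_sentence _).2 hH
  obtain ⟨b', x', h1', h2'⟩ := (CentAux.realize_sigma G n).1 hGσ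
  exact CentAux.le_of_witness hG b' x' h1' h2'
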